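/- Let Γ be a weighted forest and P a vertex of Γ. Then d(Γ) = -a_P · d(Γ_P) - Σ_{(P,Q) ∈ E(Γ)} d(Γ_{P,Q}), where Γ_P is Γ with vertex P (and incident edges) removed, and Γ_{P,Q} is Γ with both vertices P and Q (and incident edges) removed. -/

import Mathlib

open Classical Finset

/-- The matrix `Q(Γ)` of a weighted graph: `-a i` on the diagonal, `-1` for
adjacent vertices, `0` otherwise. -/
noncomputable def wMatrix {V : Type*} [Fintype V] (G : SimpleGraph V) (a : V → ℤ) :
    Matrix V V ℤ :=
  Matrix.of fun i j => if i = j then -a i else if G.Adj i j then (-1 : ℤ) else 0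

/-- The determinant `d(Γ)` of a weighted graph. -/
noncomputable def wDet {V : Type*} [Fintype V] (G : SimpleGraph V) (a : V → ℤ) : ℤ :=
  (wMatrix G a).det

/-- The determinant of the weighted graph obtained by deleting a set `s` of
vertices (and all incident edges). -/
noncomputable def wDetDel {V : Type*} [Fintype V] (G : SimpleGraph V) (a : V → ℤ)
    (s : Set V) : ℤ :=
  wDet (SimpleGraph.comap (Subtype.val : {v // v ∉ s} → V) G) (fun v => a v.1)

section Aux

variable {V : Type*} [Fintype V] [DecidableEq V]

/-- Standard basis vector (as a row/column). -/
noncomputable def eb (X : V) : V → ℤ := fun j => if j = X then 1 else 0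

lemma det_updateColumn_fsum {ι : Type*} (A : Matrix V V ℤ) (j : V) (s : Finset ι)
    (c : ι → V → ℤ) :
    (A.updateCol j (∑ x ∈ s, c x)).det = ∑ x ∈ s, (A.updateCol j (c x)).det := by
  induction s using Finset.induction_on with
  | empty =>
      simp only [Finset.sum_empty]
      exact Matrix.det_eq_zero_of_column_eq_zero j (fun i => by simp)
  | insert _ _ h ih =>
      rw [Finset.sum_insert h, Matrix.det_updateCol_add, ih, Finset.sum_insert h]

lemma det_updateRow_fsum {ι : Type*} (A : Matrix V V ℤ) (j : V) (s : Finset ι)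
    (c : ι → V → ℤ) :
    (A.updateRow j (∑ x ∈ s, c x)).det = ∑ x ∈ s, (A.updateRow j (c x)).det := by
  induction s using Finset.induction_on with
  | empty =>
      simp only [Finset.sum_empty]
      exact Matrix.det_eq_zero_of_row_eq_zero j (fun i => by simp)
  | insert _ _ h ih =>
      rw [Finset.sum_insert h, Matrix.det_updateRow_add, ih, Finset.sum_insert h]

/-- If the `P`-row and `P`-column of `A` are the standard basis vector at `P`,
then the determinant of `A` is the determinant of the matrix with `P` deleted. -/
lemma det_strip (A : Matrix V V ℤ) (P : V)
    (hr : ∀ j, A P j = if j = P then 1 else 0)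
    (hc : ∀ i, A i P = if i = P then 1 else 0) :
    A.det = (A.submatrix (Subtype.val : {v // v ∉ ({P} : Set V)} → V) Subtype.val).det := by
  let e : {v // v ∈ ({P} : Set V)} ⊕ {v // v ∉ ({P} : Set V)} ≃ V :=
    Equiv.sumCompl (fun v => v ∈ ({P} : Set V))
  rw [← Matrix.det_submatrix_equiv_self e A]
  have hA : A.submatrix e e =
      Matrix.fromBlocks 1 0 0 (A.submatrix Subtype.val Subtype.val) := by
    ext i j
    rcases i with ⟨i, hi⟩ | ⟨i, hi⟩ <;> rcases j with ⟨j, hj⟩ | ⟨j, hj⟩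
    · have hi' : i = P := hi
      have hj' : j = P := hj
      have hij : (⟨i, hi⟩ : {v // v ∈ ({P} : Set V)}) = ⟨j, hj⟩ :=
        Subtype.ext (hi'.trans hj'.symm)
      have hval : A j j = 1 := by rw [hj']; simpa using hr P
      simp only [Matrix.submatrix_apply, Equiv.sumCompl_apply_inl,
        Matrix.fromBlocks_apply₁₁, hij, Matrix.one_apply_eq, e]
      exact hval
    · have hi' : i = P := hi
      have hj' : j ≠ P := hj
      simp only [Matrix.submatrix_apply, Equiv.sumCompl_apply_inl,
        Equiv.sumCompl_apply_inr, Matrix.fromBlocks_apply₁₂, Matrix.zero_apply, e]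
      rw [hi', hr j, if_neg hj']
    · have hi' : i ≠ P := hi
      have hj' : j = P := hj
      simp only [Matrix.submatrix_apply, Equiv.sumCompl_apply_inl,
        Equiv.sumCompl_apply_inr, Matrix.fromBlocks_apply₂₁, Matrix.zero_apply, e]
      rw [hj', hc i, if_neg hi']
    · simp [e]
  rw [hA, Matrix.det_fromBlocks_zero₂₁, Matrix.det_one, one_mul]

/-- Replacing the `P`-column by the basis vector at `P` computes `d(Γ_P)`. -/
lemma det_col_basis_self (G : SimpleGraph V) (a : V → ℤ) (P : V) :
    ((wMatrix G a).updateCol P (eb P)).det = wDetDel G a {P} := by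
  set M := wMatrix G a with hM
  set A := M.updateCol P (eb P) with hA
  have hAP : A P = eb P + fun j => if j = P then (0:ℤ) else M P j := by
    funext j
    by_cases h : j = P <;>
      simp [A, Matrix.updateCol_apply, eb, h]
  have h1 : A.det = (A.updateRow P (eb P)).det := by
    conv_lhs => rw [← Matrix.updateRow_eq_self A P, hAP]
    rw [Matrix.det_updateRow_add]
    have h0 : (A.updateRow P fun j => if j = P then (0:ℤ) else M P j).det = 0 := by
      apply Matrix.det_eq_zero_of_column_eq_zero P
      intro i
      by_cases h : i = P <;>
        simp [Matrix.updateRow_apply, h, A, Matrix.updateCol_apply, eb]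
    rw [h0, add_zero]
  set B := A.updateRow P (eb P) with hB
  have h2 : B.det =
      (B.submatrix (Subtype.val : {v // v ∉ ({P} : Set V)} → V) Subtype.val).det := by
    apply det_strip
    · intro j; simp [B, eb]
    · intro i
      by_cases h : i = P <;>
        simp [B, A, Matrix.updateRow_apply, Matrix.updateCol_apply, eb, h]
  have h3 : B.submatrix (Subtype.val : {v // v ∉ ({P} : Set V)} → V) Subtype.val =
      wMatrix (SimpleGraph.comap (Subtype.val : {v // v ∉ ({P} : Set V)} → V) G)
        (fun v => a v.1) := by
    ext ⟨i, hi⟩ ⟨j, hj⟩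
    have hi' : i ≠ P := by simpa using hi
    have hj' : j ≠ P := by simpa using hj
    simp [B, A, hM, wMatrix, Matrix.updateRow_apply, Matrix.updateCol_apply,
      hi', hj', Subtype.ext_iff, SimpleGraph.comap]
    congr!
  rw [h1, h2, h3]
  unfold wDetDel wDet
  congr!

/-- The key cross-term vanishing: for an acyclic graph, if `Q ≠ R` are both
neighbors of `P`, the matrix with `P`-column `e_Q` and `P`-row `e_R` is singular. -/
lemma det_cross_zero (G : SimpleGraph V) (hG : G.IsAcyclic) (a : V → ℤ) (P Q R : V)
    (hPQ : G.Adj P Q) (hPR : G.Adj P R) (hQR : R ≠ Q) :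
    (((wMatrix G a).updateCol P (eb Q)).updateRow P (eb R)).det = 0 := by
  set M := wMatrix G a with hM
  set W := (M.updateCol P (eb Q)).updateRow P (eb R) with hW
  have hQP : Q ≠ P := hPQ.ne'
  have hRP : R ≠ P := hPR.ne'
  have hWe : ∀ x y, W x y =
      if x = P then (if y = R then 1 else 0)
      else if y = P then (if x = Q then 1 else 0) else M x y := by
    intro x y
    by_cases hx : x = P <;> by_cases hy : y = P <;>
      simp [W, Matrix.updateRow_apply, Matrix.updateCol_apply, eb, hx, hy]
  rw [Matrix.det_apply]
  apply Finset.sum_eq_zero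
  intro σ _
  suffices h : ∏ i, W (σ i) i = 0 by rw [h, smul_zero]
  by_contra hne0
  have hne : ∀ i, W (σ i) i ≠ 0 := fun i =>
    Finset.prod_ne_zero_iff.mp hne0 i (Finset.mem_univ i)
  -- forced values at P and R
  have h1 : σ P = Q := by
    have h := hne P
    rw [hWe] at h
    by_cases hp : σ P = P
    · exfalso; apply h; rw [if_pos hp, if_neg (Ne.symm hRP)]
    · rw [if_neg hp, if_pos rfl] at h
      by_contra hq
      exact h (if_neg hq)
  have h2 : σ R = P := by
    have h := hne (σ.symm P)
    rw [hWe, Equiv.apply_symm_apply, if_pos rfl] at h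
    have : σ.symm P = R := by by_contra hq; exact h (if_neg hq)
    rw [← this, Equiv.apply_symm_apply]
  have h3 : ∀ i, i ≠ P → σ i ≠ P → σ i = i ∨ G.Adj (σ i) i := by
    intro i hi hsi
    have h := hne i
    rw [hWe, if_neg hsi, if_neg hi] at h
    by_cases hfix : σ i = i
    · exact Or.inl hfix
    · right
      by_contra hadj
      exact h (by simp [hM, wMatrix, hfix, hadj])
  -- the cycle of σ through P
  have hmem : P ∈ Function.periodicPts ⇑σ := by
    refine ⟨orderOf σ, orderOf_pos σ, ?_⟩
    show σ^[orderOf σ] P = P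
    rw [Equiv.Perm.iterate_eq_pow, pow_orderOf_eq_one]
    rfl
  set n := Function.minimalPeriod ⇑σ P with hn
  have hnpos : 0 < n := Function.minimalPeriod_pos_of_mem_periodicPts hmem
  have hfix : σ^[n] P = P := Function.iterate_minimalPeriod
  have hlt : ∀ k, 0 < k → k < n → σ^[k] P ≠ P := fun k hk hkn =>
    Function.not_isPeriodicPt_of_pos_of_lt_minimalPeriod hk.ne' hkn
  have hRn : σ^[n-1] P = R := by
    apply σ.injective
    have h' : σ ((⇑σ)^[n-1] P) = (⇑σ)^[n-1+1] P :=
      (Function.iterate_succ_apply' σ (n-1) P).symm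
    have hsub : n - 1 + 1 = n := by omega
    rw [h2, h', hsub]
    exact hfix
  have hn1 : n ≠ 1 := by
    intro h
    rw [h] at hRn
    simp only [Nat.sub_self, Function.iterate_zero_apply] at hRn
    exact hRP hRn.symm
  -- the walk avoiding the edge PQ
  set G' := G \ SimpleGraph.fromEdgeSet {s(P, Q)} with hG'
  have hstep : ∀ k, 1 ≤ k → k ≤ n → G'.Reachable Q (σ^[k] P) := by
    intro k hk
    induction k, hk using Nat.le_induction with
    | base =>
        intro _
        have hQ1 : σ^[1] P = Q := by simp [h1]
        rw [hQ1]
    | succ k hk ih =>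
        intro hk1n
        have hkn : k < n := Nat.lt_of_succ_le hk1n
        refine (ih hkn.le).trans ?_
        have hiP : σ^[k] P ≠ P := hlt k hk hkn
        have hnext : σ^[k+1] P = σ (σ^[k] P) := Function.iterate_succ_apply' σ k P
        rcases eq_or_lt_of_le hk1n with heq | hlt'
        · -- last step of the cycle: σ^[k] P = R and σ^[k+1] P = P
          have hiR : σ^[k] P = R := by rw [← hRn]; congr 1; omega
          have hQend : σ^[k+1] P = P := by rw [hnext, hiR, h2]
          rw [hiR, hQend]
          apply SimpleGraph.Adj.reachable
          rw [hG', SimpleGraph.sdiff_adj]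
          refine ⟨hPR.symm, ?_⟩
          rw [SimpleGraph.fromEdgeSet_adj]
          rintro ⟨hmem', -⟩
          rw [Set.mem_singleton_iff, Sym2.eq_iff] at hmem'
          rcases hmem' with ⟨h', -⟩ | ⟨h', -⟩
          · exact hRP h'
          · exact hQR h'
        · -- middle step
          have hsiP : σ^[k+1] P ≠ P := hlt (k+1) (by omega) hlt'
          rw [hnext] at hsiP
          rcases h3 _ hiP hsiP with hfixi | hadj
          · exfalso
            have : σ^[k] (σ P) = σ^[k] P := by
              rw [← Function.iterate_succ_apply σ k P, hnext, hfixi]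
            have hPP : σ P = P := (σ.injective.iterate k) this
            exact hQP (h1 ▸ hPP)
          · apply SimpleGraph.Adj.reachable
            rw [hnext, hG', SimpleGraph.sdiff_adj]
            refine ⟨hadj.symm, ?_⟩
            rw [SimpleGraph.fromEdgeSet_adj]
            rintro ⟨hmem', -⟩
            rw [Set.mem_singleton_iff, Sym2.eq_iff] at hmem'
            rcases hmem' with ⟨h', -⟩ | ⟨-, h'⟩
            · exact hiP h'
            · exact hsiP h'
  have hreach : G'.Reachable Q P := by
    have h := hstep n hnpos le_rfl
    rwa [hfix] at h
  have hbridge := (SimpleGraph.isAcyclic_iff_forall_adj_isBridge.mp hG) hPQ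
  exact (SimpleGraph.isBridge_iff.mp hbridge) hreach.symm

/-- The diagonal cross-term: `P`-column and `P`-row both `e_Q` gives `-d(Γ_{P,Q})`. -/
lemma det_pair (G : SimpleGraph V) (a : V → ℤ) (P Q : V) (hPQ : G.Adj P Q) :
    (((wMatrix G a).updateCol P (eb Q)).updateRow P (eb Q)).det
      = - wDetDel G a {P, Q} := by
  set M := wMatrix G a with hM
  have hQP : Q ≠ P := hPQ.ne'
  have hPQ' : P ≠ Q := hPQ.ne
  set Z := (M.updateCol P (eb Q)).updateRow P (eb Q) with hZ
  -- clear column Q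
  have hZcolQ : (fun i => Z i Q) = eb P + fun i => if i = P then (0:ℤ) else Z i Q := by
    funext i
    by_cases h : i = P <;>
      simp [Z, Matrix.updateRow_apply, Matrix.updateCol_apply, eb, h, hQP]
  set Z' := Z.updateCol Q (eb P) with hZ'
  have step1 : Z.det = Z'.det := by
    conv_lhs => rw [← Matrix.updateCol_eq_self Z Q, hZcolQ]
    rw [Matrix.det_updateCol_add]
    have h0 : (Z.updateCol Q fun i => if i = P then (0:ℤ) else Z i Q).det = 0 := by
      apply Matrix.det_eq_zero_of_row_eq_zero P
      intro j
      by_cases h : j = Q <;>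
        simp [Matrix.updateCol_apply, h, Z, Matrix.updateRow_apply, eb, hQP]
    rw [h0, add_zero]
  -- clear row Q
  have hZ'rowQ : Z' Q = eb P + fun j => if j = P then (0:ℤ) else Z' Q j := by
    funext j
    by_cases h : j = P
    · subst h
      simp [Z', Z, Matrix.updateCol_apply, Matrix.updateRow_apply, eb, hQP, hPQ']
    · simp [eb, h]
  set Z'' := Z'.updateRow Q (eb P) with hZ''
  have step2 : Z'.det = Z''.det := by
    conv_lhs => rw [← Matrix.updateRow_eq_self Z' Q, hZ'rowQ]
    rw [Matrix.det_updateRow_add]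
    have h0 : (Z'.updateRow Q fun j => if j = P then (0:ℤ) else Z' Q j).det = 0 := by
      apply Matrix.det_eq_zero_of_column_eq_zero P
      intro i
      by_cases h : i = Q
      · simp [Matrix.updateRow_apply, h]
      · by_cases h2 : i = P <;>
          simp [Matrix.updateRow_apply, h, h2, Z', Z, Matrix.updateCol_apply, eb,
            hQP, hPQ']
    rw [h0, add_zero]
  -- swap rows P and Q
  set U := Z''.submatrix (Equiv.swap P Q) id with hU
  have step3 : U.det = - Z''.det := by
    rw [hU, Matrix.det_permute, Equiv.Perm.sign_swap hPQ']
    simp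
  -- U entries
  have hUe : ∀ i j, U i j = Z'' (Equiv.swap P Q i) j := fun i j => rfl
  -- strip P from U
  have hUrowP : ∀ j, U P j = if j = P then 1 else 0 := by
    intro j
    rw [hUe, Equiv.swap_apply_left]
    by_cases h : j = P <;>
      simp [Z'', Z', Z, Matrix.updateRow_apply, Matrix.updateCol_apply, eb, h,
        hQP, hPQ']
  have hUcolP : ∀ i, U i P = if i = P then 1 else 0 := by
    intro i
    rw [hUe]
    by_cases h : i = P
    · subst h; rw [Equiv.swap_apply_left]
      simp [Z'', Matrix.updateRow_apply, eb]
    · rw [if_neg h]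
      by_cases h2 : i = Q
      · subst h2; rw [Equiv.swap_apply_right]
        simp [Z'', Z', Z, Matrix.updateRow_apply, Matrix.updateCol_apply, eb, hQP, hPQ']
      · rw [Equiv.swap_apply_of_ne_of_ne h h2]
        simp [Z'', Z', Z, Matrix.updateRow_apply, Matrix.updateCol_apply, eb, h, h2, hPQ']
  have step4 : U.det =
      (U.submatrix (Subtype.val : {v // v ∉ ({P} : Set V)} → V) Subtype.val).det :=
    det_strip U P hUrowP hUcolP
  set S1 := {v // v ∉ ({P} : Set V)} with hS1
  have hQS1 : Q ∉ ({P} : Set V) := by simp [hQP]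
  set P' : S1 := ⟨Q, hQS1⟩ with hP'
  set U₁ := U.submatrix (Subtype.val : S1 → V) Subtype.val with hU₁
  have hU₁rowP' : ∀ j, U₁ P' j = if j = P' then 1 else 0 := by
    rintro ⟨j, hj⟩
    have hj' : j ≠ P := by simpa using hj
    have : U Q j = if j = Q then 1 else 0 := by
      rw [hUe, Equiv.swap_apply_right]
      by_cases h : j = Q <;>
        simp [Z'', Z', Z, Matrix.updateRow_apply, Matrix.updateCol_apply, eb, h,
          hj', hQP, hPQ']
    simp only [hU₁, Matrix.submatrix_apply, hP']
    rw [this]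
    simp [Subtype.ext_iff]
  have hU₁colP' : ∀ i, U₁ i P' = if i = P' then 1 else 0 := by
    rintro ⟨i, hi⟩
    have hi' : i ≠ P := by simpa using hi
    have : U i Q = if i = Q then 1 else 0 := by
      rw [hUe]
      by_cases h : i = Q
      · subst h; rw [Equiv.swap_apply_right]
        simp [Z'', Z', Z, Matrix.updateRow_apply, Matrix.updateCol_apply, eb, hQP, hPQ']
      · rw [Equiv.swap_apply_of_ne_of_ne hi' h]
        simp [Z'', Z', Z, Matrix.updateRow_apply, Matrix.updateCol_apply, eb, hi', h,
          hQP, hPQ']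
    simp only [hU₁, Matrix.submatrix_apply, hP']
    rw [this]
    simp [Subtype.ext_iff]
  have step5 : U₁.det =
      (U₁.submatrix (Subtype.val : {w // w ∉ ({P'} : Set S1)} → S1) Subtype.val).det :=
    det_strip U₁ P' hU₁rowP' hU₁colP'
  -- reindex the doubly-stripped matrix
  have hmemPQ : ∀ v : V, v ∉ ({P, Q} : Set V) → v ≠ P ∧ v ≠ Q := by
    intro v hv
    constructor <;> intro h <;> apply hv <;> simp [h]
  let φ : {v // v ∉ ({P, Q} : Set V)} ≃ {w // w ∉ ({P'} : Set S1)} :=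
    { toFun := fun v =>
        ⟨⟨v.1, by simp [(hmemPQ v.1 v.2).1]⟩, by
          intro h
          exact (hmemPQ v.1 v.2).2
            (congrArg Subtype.val (Set.eq_of_mem_singleton h))⟩
      invFun := fun w =>
        ⟨w.1.1, by
          have h1 : w.1.1 ≠ P := by simpa using w.1.2
          have h2 : (⟨w.1.1, w.1.2⟩ : S1) ≠ P' := by simpa using w.2
          have h3 : w.1.1 ≠ Q := by
            intro h
            exact h2 (Subtype.ext (by simpa using h))
          simp [Set.mem_insert_iff, h1, h3]⟩
      left_inv := fun v => rfl
      right_inv := fun w => rfl }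
  have step6 : (U₁.submatrix (Subtype.val : {w // w ∉ ({P'} : Set S1)} → S1)
      Subtype.val).det = wDetDel G a {P, Q} := by
    rw [← Matrix.det_submatrix_equiv_self φ]
    have heq : ((U₁.submatrix (Subtype.val : {w // w ∉ ({P'} : Set S1)} → S1)
        Subtype.val).submatrix φ φ) =
        wMatrix (SimpleGraph.comap (Subtype.val : {v // v ∉ ({P, Q} : Set V)} → V) G)
          (fun v => a v.1) := by
      ext ⟨v, hv⟩ ⟨w, hw⟩
      obtain ⟨hv1, hv2⟩ := hmemPQ v hv
      obtain ⟨hw1, hw2⟩ := hmemPQ w hw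
      show U v w = _
      rw [hUe, Equiv.swap_apply_of_ne_of_ne hv1 hv2]
      simp [Z'', Z', Z, hM, wMatrix, Matrix.updateRow_apply, Matrix.updateCol_apply,
        hv1, hv2, hw1, hw2, Subtype.ext_iff, SimpleGraph.comap]
      congr!
    rw [heq]
    unfold wDetDel wDet
    congr!
  have : Z''.det = - wDetDel G a {P, Q} := by
    have := step3
    rw [step4, step5, step6] at this
    omega
  rw [step1, step2, this]

/-- Replacing the `P`-column by the basis vector at a neighbor `Q` computes
`d(Γ_{P,Q})`. -/
lemma det_col_basis_adj (G : SimpleGraph V) (hG : G.IsAcyclic) (a : V → ℤ) (P Q : V)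
    (hPQ : G.Adj P Q) :
    ((wMatrix G a).updateCol P (eb Q)).det = wDetDel G a {P, Q} := by
  set M := wMatrix G a with hM
  set Y := M.updateCol P (eb Q) with hY
  have hQP : Q ≠ P := hPQ.ne'
  have hYP : Y P = ∑ R ∈ G.neighborFinset P, (-1 : ℤ) • eb R := by
    funext j
    rw [Finset.sum_apply]
    by_cases h : j = P
    · rw [h]
      have hl : Y P P = 0 := by
        simp [Y, Matrix.updateCol_apply, eb, hPQ.ne]
      rw [hl]
      refine (Finset.sum_eq_zero ?_).symm
      intro R hR
      have hadjR : G.Adj P R := by simpa using hR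
      simp [eb, hadjR.ne]
    · have hPj : P ≠ j := fun hh => h hh.symm
      have hl : Y P j = if G.Adj P j then (-1 : ℤ) else 0 := by
        simp [Y, Matrix.updateCol_apply, hM, wMatrix, h, hPj]
      rw [hl]
      by_cases hadj : G.Adj P j
      · rw [if_pos hadj, Finset.sum_eq_single j]
        · simp [eb]
        · intro R hR hRj
          simp [eb, Ne.symm hRj]
        · intro hj
          exact absurd (by simpa using hadj) hj
      · rw [if_neg hadj, Finset.sum_eq_zero]
        intro R hR
        have hadjR : G.Adj P R := by simpa using hR
        have : j ≠ R := fun hh => hadj (by rwa [hh])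
        simp [eb, this]
  have key : Y.det = ∑ R ∈ G.neighborFinset P, (-1 : ℤ) * (Y.updateRow P (eb R)).det := by
    conv_lhs => rw [← Matrix.updateRow_eq_self Y P, hYP]
    rw [det_updateRow_fsum]
    exact Finset.sum_congr rfl fun R _ => by rw [Matrix.det_updateRow_smul]
  rw [key, Finset.sum_eq_single Q]
  · rw [det_pair G a P Q hPQ]
    ring
  · intro R hR hRQ
    rw [det_cross_zero G hG a P Q R hPQ (by simpa using hR) hRQ]
    ring
  · intro hQ
    exact absurd (by simpa using hPQ) hQ

end Aux

/-- Lemma 5.3 (expansion by a vertex):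
`d(Γ) = -a_P · d(Γ_P) - Σ_{(P,Q) ∈ E(Γ)} d(Γ_{P,Q})`. -/
theorem forest_det_vertex_expansion {V : Type*} [Fintype V] [DecidableEq V]
    (G : SimpleGraph V) (hG : G.IsAcyclic) (a : V → ℤ) (P : V) :
    wDet G a =
      -a P * wDetDel G a {P} - ∑ q ∈ G.neighborFinset P, wDetDel G a {P, q} := by
  set M := wMatrix G a with hM
  have hcol : (fun i => M i P) =
      (-a P) • eb P + ∑ Q ∈ G.neighborFinset P, (-1 : ℤ) • eb Q := by
    funext i
    rw [Pi.add_apply, Pi.smul_apply, Finset.sum_apply]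
    by_cases h : i = P
    · subst h
      have hl : M i i = -a i := by simp [hM, wMatrix]
      rw [hl]
      have hz : ∑ Q ∈ G.neighborFinset i, ((-1 : ℤ) • eb Q) i = 0 := by
        refine Finset.sum_eq_zero ?_
        intro R hR
        have hadjR : G.Adj i R := by simpa using hR
        simp [eb, hadjR.ne]
      rw [hz, add_zero]
      simp [eb]
    · have hl : M i P = if G.Adj i P then (-1 : ℤ) else 0 := by
        simp [hM, wMatrix, h]
      rw [hl, show (eb P i) = (0 : ℤ) from if_neg h, smul_zero, zero_add]
      by_cases hadj : G.Adj i P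
      · rw [if_pos hadj, Finset.sum_eq_single i]
        · simp [eb]
        · intro R hR hRi
          simp [eb, Ne.symm hRi]
        · intro hi
          exact absurd (by simpa using hadj.symm) hi
      · rw [if_neg hadj, Finset.sum_eq_zero]
        intro R hR
        have hadjR : G.Adj P R := by simpa using hR
        have : i ≠ R := fun hh => hadj (by rw [hh]; exact hadjR.symm)
        simp [eb, this]
  have expand : M.det = -a P * ((M.updateCol P (eb P)).det) +
      ∑ Q ∈ G.neighborFinset P, (-1 : ℤ) * (M.updateCol P (eb Q)).det := by
    conv_lhs => rw [← Matrix.updateCol_eq_self M P, hcol]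
    rw [Matrix.det_updateCol_add, Matrix.det_updateCol_smul, det_updateColumn_fsum]
    congr 1
    exact Finset.sum_congr rfl fun Q _ => Matrix.det_updateCol_smul M P (-1) (eb Q)
  have hfinal : wDet G a = -a P * wDetDel G a {P} +
      ∑ Q ∈ G.neighborFinset P, (-1 : ℤ) * wDetDel G a {P, Q} := by
    have h0 : wDet G a = M.det := by
      unfold wDet
      rw [← hM]
      congr!
    rw [h0, expand, det_col_basis_self G a P]
    congr 1
    refine Finset.sum_congr rfl fun Q hQ => ?_
    rw [det_col_basis_adj G hG a P Q (by simpa using hQ)]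
  rw [hfinal, sub_eq_add_neg, ← Finset.sum_neg_distrib]
  congr 1
  exact Finset.sum_congr rfl fun Q _ => neg_one_mul _
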